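/- Let G = (V, E) be a finite simple graph with maximum degree bounded by d, and let (X, T) be an edge-overlapping and minimal tree decomposition of G of width h. Then the maximum degree of a node in the forest T is bounded by d·(h+1). -/

import Mathlib

/-- `(bags, T)` is a tree decomposition of `G`: `T` is a forest on the index set of the
family of bags; every vertex appears in some bag; every edge is contained in some bag;
and for every vertex the set of bags containing it induces a connected subgraph of `T`. -/
def IsTreeDecomposition {V : Type} {m : ℕ} (G : SimpleGraph V)
    (bags : Fin m → Finset V) (T : SimpleGraph (Fin m)) : Prop :=
  T.IsAcyclic ∧
  (∀ v : V, ∃ i, v ∈ bags i) ∧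
  (∀ u v : V, G.Adj u v → ∃ i, u ∈ bags i ∧ v ∈ bags i) ∧
  (∀ v : V, (T.induce {i : Fin m | v ∈ bags i}).Connected)


open SimpleGraph

variable {α : Type*} {T : SimpleGraph α}

lemma walk_of_induce_connected {S : Set α} (h : (T.induce S).Connected) {a b : α}
    (ha : a ∈ S) (hb : b ∈ S) : ∃ w : T.Walk a b, ∀ v ∈ w.support, v ∈ S := by
  obtain ⟨w⟩ := h.preconnected ⟨a, ha⟩ ⟨b, hb⟩
  refine ⟨w.map (SimpleGraph.Embedding.induce S).toHom, ?_⟩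
  intro v hv
  change v ∈ (Walk.map (SimpleGraph.Embedding.induce S).toHom w).support at hv
  rw [Walk.support_map] at hv
  obtain ⟨⟨u, hu⟩, _, rfl⟩ := List.mem_map.mp hv
  exact hu

lemma induce_reachable_of_walk {S : Set α} :
    ∀ {a b : α} (w : T.Walk a b), (∀ v ∈ w.support, v ∈ S) →
    ∀ (ha : a ∈ S) (hb : b ∈ S), (T.induce S).Reachable ⟨a, ha⟩ ⟨b, hb⟩ := by
  intro a b w
  induction w with
  | nil => intro _ ha hb; rfl
  | @cons a c b h p ih =>
    intro hw ha hb
    have hc : c ∈ S := hw c (by simp)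
    have hadj : (T.induce S).Adj ⟨a, ha⟩ ⟨c, hc⟩ := by simpa using h
    exact hadj.reachable.trans (ih (fun v hv => hw v (by simp [hv])) hc hb)

lemma path_length_eq_dist [DecidableEq α] (hT : T.IsAcyclic) {u v : α} (p : T.Walk u v) (hp : p.IsPath) :
    p.length = T.dist u v := by
  have hr : T.Reachable u v := ⟨p⟩
  obtain ⟨w, hw⟩ := hr.exists_walk_length_eq_dist
  have heq : (⟨p, hp⟩ : T.Path u v) = ⟨w.bypass, w.bypass_isPath⟩ :=
    isAcyclic_iff_path_unique.mp hT _ _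
  have hl : p.length = w.bypass.length := congrArg (fun q : T.Path u v => q.1.length) heq
  exact le_antisymm (hl ▸ (w.length_bypass_le).trans_eq hw) (T.dist_le p)

lemma isPath_concat {u v w : α} {p : T.Walk u v} (hp : p.IsPath) (h : T.Adj v w)
    (hw : w ∉ p.support) : (p.concat h).IsPath := by
  rw [← Walk.isPath_reverse_iff, Walk.reverse_concat, Walk.cons_isPath_iff]
  exact ⟨hp.reverse, by rwa [Walk.support_reverse, List.mem_reverse]⟩

lemma neighbors_eq_of_shared [DecidableEq α] (hac : T.IsAcyclic) {i j j' k k' : α}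
    (hij : T.Adj i j) (hij' : T.Adj i j')
    (w1 : T.Walk j k) (h1 : i ∉ w1.support) (w2 : T.Walk j' k') (h2 : i ∉ w2.support)
    (wm : T.Walk k k') (hm : i ∉ wm.support) : j = j' := by
  by_contra hne
  set W := (w1.append wm).append w2.reverse with hW
  have hiW : i ∉ W.support := by
    rw [hW]
    simp only [Walk.mem_support_append_iff, Walk.support_reverse, List.mem_reverse]
    push_neg
    exact ⟨⟨h1, hm⟩, h2⟩
  have hp : i ∉ W.bypass.support := fun h => hiW (W.support_bypass_subset h)
  have hq : (Walk.cons hij.symm (Walk.cons hij' Walk.nil)).IsPath := by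
    simp only [Walk.isPath_def, Walk.support_cons, Walk.support_nil]
    simp [hij.ne', hij'.ne, hne]
  have := isAcyclic_iff_path_unique.mp hac ⟨W.bypass, W.bypass_isPath⟩ ⟨_, hq⟩
  apply hp
  have hpe : W.bypass = Walk.cons hij.symm (Walk.cons hij' Walk.nil) :=
    congrArg Subtype.val this
  rw [hpe]
  simp

lemma exists_private_edge {V : Type} [Fintype V] [DecidableEq V] {m : ℕ}
    (G : SimpleGraph V) (bags : Fin m → Finset V) (T : SimpleGraph (Fin m))
    (htd : IsTreeDecomposition G bags T)
    (hminimal : ∀ i : Fin m, ∀ x ∈ bags i,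
      ¬ IsTreeDecomposition G (Function.update bags i ((bags i).erase x)) T)
    (i j : Fin m) (hij : T.Adj i j)
    (hov : ((bags i : Set V) ∩ (bags j : Set V)).Nonempty) :
    ∃ x y : V, x ∈ bags i ∧ G.Adj x y ∧ y ∉ bags i ∧
      ∃ k, y ∈ bags k ∧ ∃ w : T.Walk j k, i ∉ w.support := by
  classical
  obtain ⟨hac, hcover, hedge, hconn⟩ := htd
  obtain ⟨x, hxi, hxj⟩ := hov
  rw [Finset.mem_coe] at hxi hxj
  let K : Finset (Fin m) :=
    Finset.univ.filter (fun k => x ∈ bags k ∧ ∃ w : T.Walk j k, i ∉ w.support)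
  have hjK : j ∈ K := by
    refine Finset.mem_filter.mpr ⟨Finset.mem_univ _, hxj, Walk.nil, ?_⟩
    simp [hij.ne]
  obtain ⟨k, hkK, hkmax⟩ := K.exists_max_image (fun k => T.dist i k) ⟨j, hjK⟩
  obtain ⟨hxk, wjk, hwjk⟩ := (Finset.mem_filter.mp hkK).2
  have hki : k ≠ i := fun h => hwjk (h ▸ wjk.end_mem_support)
  -- key claim: any path within the x-bags from i to some l ≠ k avoids k
  have claim : ∀ l, l ≠ k → ∀ P : T.Walk i l, P.IsPath →
      (∀ v ∈ P.support, x ∈ bags v) → k ∉ P.support := by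
    intro l hlk P hP hPS hkP
    set P1 := P.takeUntil k hkP with hP1
    have hP1path : P1.IsPath := hP.takeUntil hkP
    set P2 := P.dropUntil k hkP with hP2def
    have hspec : P1.append P2 = P := P.take_spec hkP
    obtain ⟨k'', hadj, q, hq⟩ := Walk.exists_eq_cons_of_ne (fun h : k = l => hlk h.symm) P2
    have hk''P2 : k'' ∈ P2.support.tail := by rw [hq]; simp
    have hnd := hP.support_nodup
    have hsupp : P.support = P1.support ++ P2.support.tail := by
      rw [← hspec, Walk.support_append]
    have hk''P1 : k'' ∉ P1.support := by
      rw [hsupp] at hnd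
      exact fun hmem => (List.disjoint_of_nodup_append hnd) hmem hk''P2
    have hQ : (P1.concat hadj).IsPath := isPath_concat hP1path hadj hk''P1
    have hd1 : P1.length = T.dist i k := path_length_eq_dist hac _ hP1path
    have hd2 : (P1.concat hadj).length = T.dist i k'' := path_length_eq_dist hac _ hQ
    rw [Walk.length_concat, hd1] at hd2
    have hxk'' : x ∈ bags k'' := hPS _ (by
      rw [hsupp]; exact List.mem_append_right _ hk''P2)
    have hik'' : i ≠ k'' := by
      intro h
      rw [← h, T.dist_self] at hd2
      omega
    have hk''K : k'' ∈ K := by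
      refine Finset.mem_filter.mpr ⟨Finset.mem_univ _, hxk'', wjk.concat hadj, ?_⟩
      rw [Walk.support_concat]
      intro hmem
      rw [List.mem_append, List.mem_singleton] at hmem
      rcases hmem with h | h
      · exact hwjk h
      · exact hik'' h
    have := hkmax k'' hk''K
    beta_reduce at this
    omega
  -- apply minimality at bag k
  have hmin := hminimal k x hxk
  by_contra hno
  push_neg at hno
  apply hmin
  have hb'k : Function.update bags k ((bags k).erase x) k = (bags k).erase x :=
    Function.update_self _ _ _
  have hb'ne : ∀ l, l ≠ k → Function.update bags k ((bags k).erase x) l = bags l :=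
    fun l hl => Function.update_of_ne hl _ _
  refine ⟨hac, ?_, ?_, ?_⟩
  · intro v
    by_cases hvx : v = x
    · exact ⟨i, by rw [hb'ne i (Ne.symm hki)]; exact hvx ▸ hxi⟩
    · obtain ⟨l, hl⟩ := hcover v
      by_cases hlk : l = k
      · exact ⟨k, by rw [hb'k]; exact Finset.mem_erase.mpr ⟨hvx, hlk ▸ hl⟩⟩
      · exact ⟨l, by rw [hb'ne l hlk]; exact hl⟩
  · intro u v huv
    obtain ⟨l, hul, hvl⟩ := hedge u v huv
    by_cases hlk : l = k
    · subst hlk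
      by_cases hux : u = x
      · subst hux
        by_cases hvi : v ∈ bags i
        · exact ⟨i, by rw [hb'ne i (Ne.symm hki)]; exact ⟨hxi, hvi⟩⟩
        · exact absurd (hno u v hxi huv hvi l hvl wjk) hwjk
      · by_cases hvx : v = x
        · subst hvx
          by_cases hui : u ∈ bags i
          · exact ⟨i, by rw [hb'ne i (Ne.symm hki)]; exact ⟨hui, hxi⟩⟩
          · exact absurd (hno v u hxi huv.symm hui l hul wjk) hwjk
        · refine ⟨l, ?_⟩
          rw [hb'k]
          exact ⟨Finset.mem_erase.mpr ⟨hux, hul⟩, Finset.mem_erase.mpr ⟨hvx, hvl⟩⟩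
    · exact ⟨l, by rw [hb'ne l hlk]; exact ⟨hul, hvl⟩⟩
  · intro v
    by_cases hvx : v = x
    · subst hvx
      have hset : {l : Fin m | v ∈ Function.update bags k ((bags k).erase v) l}
          = {l : Fin m | v ∈ bags l ∧ l ≠ k} := by
        ext l
        by_cases hlk : l = k
        · subst hlk
          simp [hb'k]
        · simp [hb'ne l hlk, hlk]
      rw [hset]
      have hiS : i ∈ {l : Fin m | v ∈ bags l ∧ l ≠ k} := by exact ⟨hxi, Ne.symm hki⟩
      have hreach : ∀ c : {l : Fin m | v ∈ bags l ∧ l ≠ k},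
          (T.induce {l : Fin m | v ∈ bags l ∧ l ≠ k}).Reachable c ⟨i, hiS⟩ := by
        rintro ⟨l, hxl, hlk⟩
        obtain ⟨w0, hw0⟩ := walk_of_induce_connected (hconn v) hxi hxl
        have hPs : ∀ u ∈ w0.bypass.support, v ∈ bags u :=
          fun u hu => hw0 u (w0.support_bypass_subset hu)
        have hkP : k ∉ w0.bypass.support := claim l hlk w0.bypass w0.bypass_isPath hPs
        exact (induce_reachable_of_walk w0.bypass
          (fun u hu => by exact ⟨hPs u hu, fun h => hkP (h ▸ hu)⟩) hiS (by exact ⟨hxl, hlk⟩)).symm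
      haveI : Nonempty ↥{l : Fin m | v ∈ bags l ∧ l ≠ k} := ⟨⟨i, hiS⟩⟩
      exact ⟨fun a b => (hreach a).trans (hreach b).symm⟩
    · have hset : {l : Fin m | v ∈ Function.update bags k ((bags k).erase x) l}
          = {l : Fin m | v ∈ bags l} := by
        ext l
        by_cases hlk : l = k
        · subst hlk; simp [hb'k, Finset.mem_erase, hvx]
        · simp [hb'ne l hlk]
      rw [hset]
      exact hconn v

/-- Lemma 5 of the paper: if `G` has maximum degree at most `d` and
`(bags, T)` is an edge-overlapping and minimal tree decomposition of `G` of width at most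
`h`, then every node of the forest `T` has degree at most `d·(h+1)` in `T`. -/
theorem tree_decomposition_degree_bound {V : Type} [Fintype V] [DecidableEq V]
    (G : SimpleGraph V) (d h m : ℕ)
    (hdeg : ∀ v : V, (G.neighborSet v).ncard ≤ d)
    (bags : Fin m → Finset V) (T : SimpleGraph (Fin m))
    (htd : IsTreeDecomposition G bags T)
    (hwidth : ∀ i, (bags i).card ≤ h + 1)
    (hoverlap : ∀ i j : Fin m, T.Adj i j → ((bags i : Set V) ∩ (bags j : Set V)).Nonempty)
    (hminimal : ∀ i : Fin m, ∀ x ∈ bags i,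
      ¬ IsTreeDecomposition G (Function.update bags i ((bags i).erase x)) T) :
    ∀ i : Fin m, (T.neighborSet i).ncard ≤ d * (h + 1) := by
  classical
  intro i
  rcases isEmpty_or_nonempty V with hV | hV
  · have hempty : T.neighborSet i = ∅ := by
      ext j
      simp only [SimpleGraph.mem_neighborSet, Set.mem_empty_iff_false, iff_false]
      intro hadj
      obtain ⟨z, _⟩ := hoverlap i j hadj
      exact hV.false z
    rw [hempty]
    simp
  · inhabit V
    have key : ∀ j : Fin m, ∃ p : V × V, T.Adj i j →
        (p.1 ∈ bags i ∧ G.Adj p.1 p.2 ∧ p.2 ∉ bags i ∧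
          ∃ k, p.2 ∈ bags k ∧ ∃ w : T.Walk j k, i ∉ w.support) := by
      intro j
      by_cases hadj : T.Adj i j
      · obtain ⟨x, y, h1, h2, h3, h4⟩ :=
          exists_private_edge G bags T htd hminimal i j hadj (hoverlap i j hadj)
        exact ⟨(x, y), fun _ => ⟨h1, h2, h3, h4⟩⟩
      · exact ⟨(default, default), fun hc => absurd hc hadj⟩
    choose F hF using key
    set t : Finset (V × V) :=
      (bags i).biUnion (fun x => (G.neighborFinset x).image (fun y => (x, y))) with ht
    have hmaps : ∀ j ∈ T.neighborSet i, F j ∈ (t : Set (V × V)) := by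
      intro j hj
      obtain ⟨h1, h2, _, _⟩ := hF j hj
      rw [Finset.mem_coe, ht, Finset.mem_biUnion]
      exact ⟨(F j).1, h1, Finset.mem_image.mpr ⟨(F j).2, by
        rw [SimpleGraph.mem_neighborFinset]; exact h2, rfl⟩⟩
    have hinj : Set.InjOn F (T.neighborSet i) := by
      intro j hj j' hj' heq
      obtain ⟨h1, h2, h3, k, hk, w1, hw1⟩ := hF j hj
      obtain ⟨h1', h2', h3', k', hk', w2, hw2⟩ := hF j' hj'
      have hy : (F j').2 = (F j).2 := by rw [heq]
      rw [hy] at hk'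
      obtain ⟨wm, hwm⟩ := walk_of_induce_connected (htd.2.2.2 (F j).2) hk hk'
      have him : i ∉ wm.support := fun hmem => h3 (hwm i hmem)
      exact neighbors_eq_of_shared htd.1 hj hj' w1 hw1 w2 hw2 wm him
    have hle : (T.neighborSet i).ncard ≤ (t : Set (V × V)).ncard :=
      Set.ncard_le_ncard_of_injOn F hmaps hinj (t.finite_toSet)
    rw [Set.ncard_coe_finset] at hle
    have htcard : t.card ≤ (h + 1) * d := by
      refine (Finset.card_biUnion_le).trans ?_
      have hsum : ∀ x ∈ bags i, ((G.neighborFinset x).image (fun y => (x, y))).card ≤ d := by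
        intro x _
        refine (Finset.card_image_le).trans ?_
        rw [← Set.ncard_coe_finset]
        have hcoe : ((G.neighborFinset x : Finset V) : Set V) = G.neighborSet x := by
          ext y; simp [SimpleGraph.mem_neighborFinset]
        rw [hcoe]
        exact hdeg x
      calc ∑ x ∈ bags i, ((G.neighborFinset x).image (fun y => (x, y))).card
          ≤ ∑ _x ∈ bags i, d := Finset.sum_le_sum hsum
        _ = (bags i).card * d := by rw [Finset.sum_const, smul_eq_mul]
        _ ≤ (h + 1) * d := Nat.mul_le_mul_right _ (hwidth i)
    rw [Nat.mul_comm d (h + 1)]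
    omega
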